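/- A morphism f : n → m in the Temperley-Lieb diagram category D is epic if and only if f has no caps, i.e. no two elements of the bottom row [m] are paired with each other by f. -/

import Mathlib

open Sum Relation

/-- A fixed-point free involution. -/
def FPF {X : Type*} (f : X → X) : Prop :=
  Function.Involutive f ∧ ∀ x, f x ≠ x

/-- Condition (PL1) for `f` with respect to the order on `X`:
if `i < j < f i` then `i < f j < f i`. -/
def PL1 {X : Type*} [Preorder X] (f : X → X) : Prop :=
  ∀ i j, i < j → j < f i → i < f j ∧ f j < f i

/-- Incomparability `x # y`. -/
def Incomp {X : Type*} [Preorder X] (x y : X) : Prop :=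
  ¬ (x ≤ y) ∧ ¬ (y ≤ x)

/-- Condition (PL2): if `f i # i`, `i < j` and `j # f j` then `f i < f j`. -/
def PL2 {X : Type*} [Preorder X] (f : X → X) : Prop :=
  ∀ i j, Incomp (f i) i → i < j → Incomp j (f j) → f i < f j

/-- A planar involution on `[n] ⊕ [m]` (with the disjoint-sum partial order):
a fixed-point free involution satisfying (PL1) and (PL2).  These are the
elements of `P(n, m)`. -/
def Planar {n m : ℕ} (f : Fin n ⊕ Fin m → Fin n ⊕ Fin m) : Prop :=
  FPF f ∧ PL1 f ∧ PL2 f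

/-- The graph relation of a function. -/
def graphRel {X : Type*} (f : X → X) : X → X → Prop := fun x y => f x = y

/-- The execution formula: the Geometry-of-Interaction composite of a relation
`R` on `A ⊕ B` and a relation `S` on `B ⊕ C`, defined componentwise by
`θ_{A,A} = R_{A,A} ∪ R_{A,B};S_{B,B};(R_{B,B};S_{B,B})*;R_{B,A}`,
`θ_{A,C} = R_{A,B};(S_{B,B};R_{B,B})*;S_{B,C}`,
`θ_{C,A} = S_{C,B};(R_{B,B};S_{B,B})*;R_{B,A}`,
`θ_{C,C} = S_{C,C} ∪ S_{C,B};R_{B,B};(S_{B,B};R_{B,B})*;S_{B,C}`. -/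
def ExecR {A B C : Type*} (R : A ⊕ B → A ⊕ B → Prop) (S : B ⊕ C → B ⊕ C → Prop) :
    A ⊕ C → A ⊕ C → Prop :=
  let Raa : A → A → Prop := fun i j => R (Sum.inl i) (Sum.inl j)
  let Rab : A → B → Prop := fun i j => R (Sum.inl i) (Sum.inr j)
  let Rba : B → A → Prop := fun i j => R (Sum.inr i) (Sum.inl j)
  let Rbb : B → B → Prop := fun i j => R (Sum.inr i) (Sum.inr j)
  let Sbb : B → B → Prop := fun i j => S (Sum.inl i) (Sum.inl j)
  let Sbc : B → C → Prop := fun i j => S (Sum.inl i) (Sum.inr j)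
  let Scb : C → B → Prop := fun i j => S (Sum.inr i) (Sum.inl j)
  let Scc : C → C → Prop := fun i j => S (Sum.inr i) (Sum.inr j)
  fun x y =>
    match x, y with
    | Sum.inl i, Sum.inl j =>
        Raa i j ∨
          Relation.Comp Rab
            (Relation.Comp Sbb
              (Relation.Comp (Relation.ReflTransGen (Relation.Comp Rbb Sbb)) Rba)) i j
    | Sum.inl i, Sum.inr j =>
        Relation.Comp Rab
          (Relation.Comp (Relation.ReflTransGen (Relation.Comp Sbb Rbb)) Sbc) i j
    | Sum.inr i, Sum.inl j =>
        Relation.Comp Scb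
          (Relation.Comp (Relation.ReflTransGen (Relation.Comp Rbb Sbb)) Rba) i j
    | Sum.inr i, Sum.inr j =>
        Scc i j ∨
          Relation.Comp Scb
            (Relation.Comp Rbb
              (Relation.Comp (Relation.ReflTransGen (Relation.Comp Sbb Rbb)) Sbc)) i j

/-- The execution-formula composite of two involutions, as a function: for
planar involutions the execution relation is the graph of a function, and
`execFun f g` is that function. -/
noncomputable def execFun {n m p : ℕ} (f : Fin n ⊕ Fin m → Fin n ⊕ Fin m)
    (g : Fin m ⊕ Fin p → Fin m ⊕ Fin p) : Fin n ⊕ Fin p → Fin n ⊕ Fin p :=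
  fun x =>
    @dite _ (∃ y, ExecR (graphRel f) (graphRel g) x y) (Classical.propDecidable _)
      (fun h => h.choose) (fun _ => x)

/-- The partial bijection `Cyc(f,g) = f_{m,m} ; g_{m,m}` on `[m]`:
relational composition of the caps of `f` with the cups of `g`. -/
def Cyc {n m p : ℕ} (f : Fin n ⊕ Fin m → Fin n ⊕ Fin m)
    (g : Fin m ⊕ Fin p → Fin m ⊕ Fin p) : Fin m → Fin m → Prop :=
  Relation.Comp (fun i j => f (Sum.inr i) = Sum.inr j)
    (fun i j => g (Sum.inl i) = Sum.inl j)

/-- Iterated relational composition `r^k` (with `r^0` the identity). -/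
def relPow {α : Type*} (r : α → α → Prop) : ℕ → α → α → Prop
  | 0 => Eq
  | k + 1 => Relation.Comp r (relPow r k)

/-- `i` is a cyclic element of `r`: `r^k i i` for some `k > 0`. -/
def Cyclic {α : Type*} (r : α → α → Prop) (i : α) : Prop :=
  ∃ k, 0 < k ∧ relPow r k i i

/-- The cycle (orbit) of `i` under `r`. -/
def cycleOf {α : Type*} (r : α → α → Prop) (i : α) : Set α :=
  {j | ∃ k, relPow r k i j}

/-- `Z(f,g)`: the number of distinct cycles of `Cyc(f,g)`. -/
noncomputable def Z {n m p : ℕ} (f : Fin n ⊕ Fin m → Fin n ⊕ Fin m)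
    (g : Fin m ⊕ Fin p → Fin m ⊕ Fin p) : ℕ :=
  {S : Set (Fin m) | ∃ i, Cyclic (Cyc f g) i ∧ S = cycleOf (Cyc f g) i}.ncard

/-- A morphism `n → m` of the Temperley-Lieb category: a loop count together
with a function on `[n] ⊕ [m]` (required to be a planar involution for
genuine morphisms). -/
def TLHom (n m : ℕ) : Type :=
  ℕ × (Fin n ⊕ Fin m → Fin n ⊕ Fin m)

/-- Composition in the Temperley-Lieb category:
`(t, g) ∘ (s, f) = (s + t + Z(f,g), f;g)`. -/
noncomputable def TLcomp {n m p : ℕ} (F : TLHom n m) (G : TLHom m p) : TLHom n p :=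
  (F.1 + G.1 + Z F.2 G.2, execFun F.2 G.2)

/-- The identity morphism: zero loops and the twist involution `i ↔ i'`. -/
def tlid (n : ℕ) : TLHom n n :=
  (0, Sum.swap)

/-- `f` has a cup: two top-row elements are paired with each other. -/
def HasCup {n m : ℕ} (f : Fin n ⊕ Fin m → Fin n ⊕ Fin m) : Prop :=
  ∃ i j : Fin n, f (Sum.inl i) = Sum.inl j

/-- `f` has a cap: two bottom-row elements are paired with each other. -/
def HasCap {n m : ℕ} (f : Fin n ⊕ Fin m → Fin n ⊕ Fin m) : Prop :=
  ∃ i j : Fin m, f (Sum.inr i) = Sum.inr j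

/-- `F : n → m` is monic in the diagram category `D`: left-cancellable with
respect to all morphisms of `D` (pairs of a loop count and a planar
involution). -/
def Monic {n m : ℕ} (F : TLHom n m) : Prop :=
  ∀ (p : ℕ) (G H : TLHom p n), Planar G.2 → Planar H.2 →
    TLcomp G F = TLcomp H F → G = H

/-- `F : n → m` is epic in the diagram category `D`: right-cancellable with
respect to all morphisms of `D`. -/
def Epic {n m : ℕ} (F : TLHom n m) : Prop :=
  ∀ (p : ℕ) (G H : TLHom m p), Planar G.2 → Planar H.2 →
    TLcomp F G = TLcomp F H → G = H

section AuxBasic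
open Relation

lemma rtg_eq_of_empty {α : Type*} {r : α → α → Prop} (h : ∀ a b, ¬ r a b) :
    Relation.ReflTransGen r = Eq := by
  funext a b
  rw [eq_iff_iff]
  constructor
  · intro hab
    rcases hab.cases_head with rfl | ⟨c, hc, -⟩
    · rfl
    · exact absurd hc (h a c)
  · rintro rfl; exact .refl

lemma rtg_of_no_step {α : Type*} {r : α → α → Prop} {a b : α}
    (h : Relation.ReflTransGen r a b) (ha : ∀ c, ¬ r a c) : a = b := by
  rcases h.cases_head with rfl | ⟨c, hc, -⟩
  · rfl
  · exact absurd hc (ha c)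

lemma execFun_eq_of_graph {n m p : ℕ} (f : Fin n ⊕ Fin m → Fin n ⊕ Fin m)
    (g : Fin m ⊕ Fin p → Fin m ⊕ Fin p) (e : Fin n ⊕ Fin p → Fin n ⊕ Fin p)
    (h : ExecR (graphRel f) (graphRel g) = graphRel e) : execFun f g = e := by
  funext x
  unfold execFun
  rw [h]
  have hx : ∃ y, graphRel e x y := ⟨e x, rfl⟩
  rw [dif_pos hx]
  exact hx.choose_spec.symm

lemma Z_eq_zero_of_cyc_empty {n m p : ℕ} (f : Fin n ⊕ Fin m → Fin n ⊕ Fin m)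
    (g : Fin m ⊕ Fin p → Fin m ⊕ Fin p) (h : ∀ a b, ¬ Cyc f g a b) : Z f g = 0 := by
  have : {S : Set (Fin m) | ∃ i, Cyclic (Cyc f g) i ∧ S = cycleOf (Cyc f g) i} = ∅ := by
    ext S
    simp only [Set.mem_setOf_eq, Set.mem_empty_iff_false, iff_false, not_exists]
    rintro i ⟨⟨k, hk, hpow⟩, -⟩
    cases k with
    | zero => omega
    | succ k => obtain ⟨z, hz, -⟩ := hpow; exact h i z hz
  rw [Z, this, Set.ncard_empty]

end AuxBasic
section AuxSwap
open Sum Relation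

lemma execR_swap {n m : ℕ} (f : Fin n ⊕ Fin m → Fin n ⊕ Fin m) :
    ExecR (graphRel f) (graphRel (Sum.swap : Fin m ⊕ Fin m → Fin m ⊕ Fin m))
      = graphRel f := by
  funext x y
  rw [eq_iff_iff]
  cases x <;> cases y <;>
    simp only [ExecR, graphRel, Relation.Comp, Sum.swap, Sum.elim_inl, Sum.elim_inr]
  case inl.inl a b =>
    constructor
    · rintro (h | ⟨k, hk, k2, hk2, -⟩)
      · exact h
      · simp at hk2
    · exact Or.inl
  case inl.inr a c =>
    constructor
    · rintro ⟨k, hk, k3, hst, hb⟩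
      obtain rfl := rtg_of_no_step hst (by rintro d ⟨e, he, -⟩; simp at he)
      simp only [Sum.inr.injEq] at hb
      rwa [hb] at hk
    · intro h
      exact ⟨c, h, c, .refl, rfl⟩
  case inr.inl c b =>
    constructor
    · rintro ⟨k, hk, k3, hst, hb⟩
      simp only [Sum.inl.injEq] at hk
      obtain rfl := rtg_of_no_step hst (by rintro d ⟨e, -, he⟩; simp at he)
      rwa [← hk] at hb
    · intro h
      exact ⟨c, rfl, c, .refl, h⟩
  case inr.inr c c' =>
    constructor
    · rintro (h | ⟨k, hk, k', hk', k3, hst, hb⟩)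
      · simp at h
      · simp only [Sum.inl.injEq] at hk
        subst hk
        obtain rfl := rtg_of_no_step hst (by rintro d ⟨e, he, -⟩; simp at he)
        simp only [Sum.inr.injEq] at hb
        subst hb
        exact hk'
    · intro h
      exact Or.inr ⟨c, rfl, c', h, c', .refl, rfl⟩

lemma planar_swap (m : ℕ) : Planar (Sum.swap : Fin m ⊕ Fin m → Fin m ⊕ Fin m) := by
  refine ⟨⟨Sum.swap_swap, ?_⟩, ?_, ?_⟩
  · rintro (x | x) h <;> simp [Sum.swap] at h
  · rintro (a | a) (b | b) hxy hyx <;> simp [Sum.swap] at hxy hyx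
  · rintro (a | a) (b | b) h1 hxy h2
    · exact Sum.inr_lt_inr_iff.2 (Sum.inl_lt_inl_iff.1 hxy)
    · exact absurd hxy (by simp)
    · exact absurd hxy (by simp)
    · exact Sum.inl_lt_inl_iff.2 (Sum.inr_lt_inr_iff.1 hxy)
end AuxSwap
section AuxCapcup
open Sum Relation

/-- The diagram with a cup at `(i,j)` on top, a cap at `(i,j)` on bottom, and
identity strands elsewhere. -/
def capcup {m : ℕ} (i j : Fin m) : Fin m ⊕ Fin m → Fin m ⊕ Fin m
  | Sum.inl k => if k = i then Sum.inl j else if k = j then Sum.inl i else Sum.inr k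
  | Sum.inr k => if k = i then Sum.inr j else if k = j then Sum.inr i else Sum.inl k

variable {m : ℕ} {i j : Fin m}

lemma capcup_inl_eq_inl {k b : Fin m} :
    capcup i j (Sum.inl k) = Sum.inl b ↔ (k = i ∧ b = j) ∨ (k = j ∧ b = i) := by
  simp only [capcup]
  split_ifs with h1 h2 <;> simp_all [eq_comm]

lemma capcup_inl_eq_inr {k c : Fin m} :
    capcup i j (Sum.inl k) = Sum.inr c ↔ k ≠ i ∧ k ≠ j ∧ c = k := by
  simp only [capcup]
  split_ifs with h1 h2 <;> simp_all [eq_comm]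

lemma capcup_inr_eq_inr {k b : Fin m} :
    capcup i j (Sum.inr k) = Sum.inr b ↔ (k = i ∧ b = j) ∨ (k = j ∧ b = i) := by
  simp only [capcup]
  split_ifs with h1 h2 <;> simp_all [eq_comm]

lemma capcup_inr_eq_inl {k c : Fin m} :
    capcup i j (Sum.inr k) = Sum.inl c ↔ k ≠ i ∧ k ≠ j ∧ c = k := by
  simp only [capcup]
  split_ifs with h1 h2 <;> simp_all [eq_comm]

lemma capcup_involutive : Function.Involutive (capcup i j) := by
  rintro (k | k)
  · rcases hc : capcup i j (Sum.inl k) with d | d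
    · rcases capcup_inl_eq_inl.1 hc with ⟨rfl, rfl⟩ | ⟨rfl, rfl⟩
      · exact capcup_inl_eq_inl.2 (Or.inr ⟨rfl, rfl⟩)
      · exact capcup_inl_eq_inl.2 (Or.inl ⟨rfl, rfl⟩)
    · obtain ⟨h1, h2, rfl⟩ := capcup_inl_eq_inr.1 hc
      exact capcup_inr_eq_inl.2 ⟨h1, h2, rfl⟩
  · rcases hc : capcup i j (Sum.inr k) with d | d
    · obtain ⟨h1, h2, rfl⟩ := capcup_inr_eq_inl.1 hc
      exact capcup_inl_eq_inr.2 ⟨h1, h2, rfl⟩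
    · rcases capcup_inr_eq_inr.1 hc with ⟨rfl, rfl⟩ | ⟨rfl, rfl⟩
      · exact capcup_inr_eq_inr.2 (Or.inr ⟨rfl, rfl⟩)
      · exact capcup_inr_eq_inr.2 (Or.inl ⟨rfl, rfl⟩)

lemma planar_capcup (hji : (j : ℕ) = (i : ℕ) + 1) : Planar (capcup i j) := by
  have hij : i ≠ j := by intro h; rw [h] at hji; omega
  refine ⟨⟨capcup_involutive, ?_⟩, ?_, ?_⟩
  · rintro (k | k) h
    · rcases capcup_inl_eq_inl.1 h with ⟨rfl, rfl⟩ | ⟨rfl, rfl⟩ <;> omega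
    · rcases capcup_inr_eq_inr.1 h with ⟨rfl, rfl⟩ | ⟨rfl, rfl⟩ <;> omega
  · -- PL1
    rintro (a | a) (b | b) hxy hyx
    · rw [Sum.inl_lt_inl_iff, Fin.lt_def] at hxy
      rcases hc : capcup i j (Sum.inl a) with d | d
      · rw [hc, Sum.inl_lt_inl_iff, Fin.lt_def] at hyx
        rcases capcup_inl_eq_inl.1 hc with ⟨rfl, rfl⟩ | ⟨rfl, rfl⟩ <;> omega
      · rw [hc] at hyx; exact absurd hyx (by simp)
    · exact absurd hxy (by simp)
    · exact absurd hxy (by simp)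
    · rw [Sum.inr_lt_inr_iff, Fin.lt_def] at hxy
      rcases hc : capcup i j (Sum.inr a) with d | d
      · rw [hc] at hyx; exact absurd hyx (by simp)
      · rw [hc, Sum.inr_lt_inr_iff, Fin.lt_def] at hyx
        rcases capcup_inr_eq_inr.1 hc with ⟨rfl, rfl⟩ | ⟨rfl, rfl⟩ <;> omega
  · -- PL2
    rintro (a | a) (b | b) h1 hxy h2
    · rcases hca : capcup i j (Sum.inl a) with d | d
      · rw [hca] at h1
        rcases le_total d a with h | h
        · exact absurd (Sum.inl_le_inl_iff.2 h) h1.1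
        · exact absurd (Sum.inl_le_inl_iff.2 h) h1.2
      · rcases hcb : capcup i j (Sum.inl b) with e | e
        · rw [hcb] at h2
          rcases le_total b e with h | h
          · exact absurd (Sum.inl_le_inl_iff.2 h) h2.1
          · exact absurd (Sum.inl_le_inl_iff.2 h) h2.2
        · obtain ⟨-, -, rfl⟩ := capcup_inl_eq_inr.1 hca
          obtain ⟨-, -, rfl⟩ := capcup_inl_eq_inr.1 hcb
          exact Sum.inr_lt_inr_iff.2 (Sum.inl_lt_inl_iff.1 hxy)
    · exact absurd hxy (by simp)
    · exact absurd hxy (by simp)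
    · rcases hca : capcup i j (Sum.inr a) with d | d
      · rcases hcb : capcup i j (Sum.inr b) with e | e
        · obtain ⟨-, -, rfl⟩ := capcup_inr_eq_inl.1 hca
          obtain ⟨-, -, rfl⟩ := capcup_inr_eq_inl.1 hcb
          exact Sum.inl_lt_inl_iff.2 (Sum.inr_lt_inr_iff.1 hxy)
        · rw [hcb] at h2
          rcases le_total b e with h | h
          · exact absurd (Sum.inr_le_inr_iff.2 h) h2.1
          · exact absurd (Sum.inr_le_inr_iff.2 h) h2.2
      · rw [hca] at h1
        rcases le_total d a with h | h
        · exact absurd (Sum.inr_le_inr_iff.2 h) h1.1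
        · exact absurd (Sum.inr_le_inr_iff.2 h) h1.2

end AuxCapcup
section AuxCapcupExec
open Sum Relation

variable {n m : ℕ} {f : Fin n ⊕ Fin m → Fin n ⊕ Fin m} {i j : Fin m}

lemma execR_capcup (hinv : Function.Involutive f) (hcap : f (Sum.inr i) = Sum.inr j) :
    ExecR (graphRel f) (graphRel (capcup i j)) = graphRel f := by
  have hcap' : f (Sum.inr j) = Sum.inr i := by
    have := hinv (Sum.inr i); rwa [hcap] at this
  have hni : ∀ x, f x = Sum.inr i → x = Sum.inr j := fun x hx =>
    hinv.injective (hx.trans hcap'.symm)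
  have hnj : ∀ x, f x = Sum.inr j → x = Sum.inr i := fun x hx =>
    hinv.injective (hx.trans hcap.symm)
  funext x y
  rw [eq_iff_iff]
  cases x <;> cases y <;> simp only [ExecR, graphRel, Relation.Comp]
  case inl.inl a b =>
    constructor
    · rintro (h | ⟨k, hk, k2, hk2, -⟩)
      · exact h
      · rcases capcup_inl_eq_inl.1 hk2 with ⟨rfl, -⟩ | ⟨rfl, -⟩
        · exact absurd (hni _ hk) (by simp)
        · exact absurd (hnj _ hk) (by simp)
    · exact Or.inl
  case inl.inr a c =>
    constructor
    · rintro ⟨k, hk, k3, hst, hb⟩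
      have hki : k ≠ i := by rintro rfl; exact absurd (hni _ hk) (by simp)
      have hkj : k ≠ j := by rintro rfl; exact absurd (hnj _ hk) (by simp)
      obtain rfl := rtg_of_no_step hst (by
        rintro d ⟨e, he, -⟩
        rcases capcup_inl_eq_inl.1 he with ⟨h1, -⟩ | ⟨h1, -⟩
        · exact hki h1
        · exact hkj h1)
      obtain ⟨-, -, rfl⟩ := capcup_inl_eq_inr.1 hb
      exact hk
    · intro h
      refine ⟨c, h, c, .refl, capcup_inl_eq_inr.2 ⟨?_, ?_, rfl⟩⟩
      · rintro rfl; exact absurd (hni _ h) (by simp)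
      · rintro rfl; exact absurd (hnj _ h) (by simp)
  case inr.inl c b =>
    constructor
    · rintro ⟨k, hk, k3, hst, hb⟩
      obtain ⟨hci, hcj, rfl⟩ := capcup_inr_eq_inl.1 hk
      obtain rfl := rtg_of_no_step hst (by
        rintro d ⟨e, he, he2⟩
        rcases capcup_inl_eq_inl.1 he2 with ⟨rfl, -⟩ | ⟨rfl, -⟩
        · exact hcj (by simpa using hni _ he)
        · exact hci (by simpa using hnj _ he))
      exact hb
    · intro h
      have hci : c ≠ i := by rintro rfl; rw [hcap] at h; simp at h
      have hcj : c ≠ j := by rintro rfl; rw [hcap'] at h; simp at h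
      exact ⟨c, capcup_inr_eq_inl.2 ⟨hci, hcj, rfl⟩, c, .refl, h⟩
  case inr.inr c c' =>
    constructor
    · rintro (h | ⟨k, hk, k', hk', k3, hst, hb⟩)
      · rcases capcup_inr_eq_inr.1 h with ⟨rfl, rfl⟩ | ⟨rfl, rfl⟩
        · exact hcap
        · exact hcap'
      · obtain ⟨hci, hcj, rfl⟩ := capcup_inr_eq_inl.1 hk
        have hk'i : k' ≠ i := by rintro rfl; exact hcj (by simpa using hni _ hk')
        have hk'j : k' ≠ j := by rintro rfl; exact hci (by simpa using hnj _ hk')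
        obtain rfl := rtg_of_no_step hst (by
          rintro d ⟨e, he, -⟩
          rcases capcup_inl_eq_inl.1 he with ⟨h1, -⟩ | ⟨h1, -⟩
          · exact hk'i h1
          · exact hk'j h1)
        obtain ⟨-, -, rfl⟩ := capcup_inl_eq_inr.1 hb
        exact hk'
    · intro h
      by_cases hc1 : c = i
      · subst hc1
        obtain rfl : c' = j := by rw [hcap] at h; simpa using h.symm
        exact Or.inl (capcup_inr_eq_inr.2 (Or.inl ⟨rfl, rfl⟩))
      · by_cases hc2 : c = j
        · subst hc2
          obtain rfl : c' = i := by rw [hcap'] at h; simpa using h.symm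
          exact Or.inl (capcup_inr_eq_inr.2 (Or.inr ⟨rfl, rfl⟩))
        · have h1' : c' ≠ i := by rintro rfl; exact hc2 (by simpa using hni _ h)
          have h2' : c' ≠ j := by rintro rfl; exact hc1 (by simpa using hnj _ h)
          exact Or.inr ⟨c, capcup_inr_eq_inl.2 ⟨hc1, hc2, rfl⟩, c', h, c', .refl,
            capcup_inl_eq_inr.2 ⟨h1', h2', rfl⟩⟩

lemma relPow_fix {α : Type*} {r : α → α → Prop} {a : α} (ha : ∀ c, r a c → c = a) :
    ∀ k b, relPow r k a b → b = a := by
  intro k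
  induction k with
  | zero => intro b hb; exact hb.symm
  | succ k ih =>
    rintro b ⟨z, hz, hrest⟩
    obtain rfl := ha z hz
    exact ih b hrest

lemma cycleOf_fix {α : Type*} {r : α → α → Prop} {a : α} (ha : ∀ c, r a c → c = a) :
    cycleOf r a = {a} := by
  ext b
  constructor
  · rintro ⟨k, hk⟩; exact relPow_fix ha k b hk
  · rintro rfl; exact ⟨0, rfl⟩

lemma Z_capcup (hinv : Function.Involutive f) (hcap : f (Sum.inr i) = Sum.inr j)
    (hij : i ≠ j) : Z f (capcup i j) = 2 := by
  have hcap' : f (Sum.inr j) = Sum.inr i := by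
    have := hinv (Sum.inr i); rwa [hcap] at this
  have hni : ∀ x, f x = Sum.inr i → x = Sum.inr j := fun x hx =>
    hinv.injective (hx.trans hcap'.symm)
  have hnj : ∀ x, f x = Sum.inr j → x = Sum.inr i := fun x hx =>
    hinv.injective (hx.trans hcap.symm)
  have hCyc : ∀ a b, Cyc f (capcup i j) a b ↔ (a = i ∧ b = i) ∨ (a = j ∧ b = j) := by
    intro a b
    constructor
    · rintro ⟨k, hk, hk2⟩
      rcases capcup_inl_eq_inl.1 hk2 with ⟨rfl, rfl⟩ | ⟨rfl, rfl⟩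
      · exact Or.inr ⟨by simpa using hni _ hk, rfl⟩
      · exact Or.inl ⟨by simpa using hnj _ hk, rfl⟩
    · rintro (⟨rfl, rfl⟩ | ⟨rfl, rfl⟩)
      · exact ⟨j, hcap, capcup_inl_eq_inl.2 (Or.inr ⟨rfl, rfl⟩)⟩
      · exact ⟨i, hcap', capcup_inl_eq_inl.2 (Or.inl ⟨rfl, rfl⟩)⟩
  have hfixi : ∀ c, Cyc f (capcup i j) i c → c = i := by
    intro c hc
    rcases (hCyc i c).1 hc with ⟨-, rfl⟩ | ⟨h, -⟩
    · rfl
    · exact absurd h hij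
  have hfixj : ∀ c, Cyc f (capcup i j) j c → c = j := by
    intro c hc
    rcases (hCyc j c).1 hc with ⟨h, -⟩ | ⟨-, rfl⟩
    · exact absurd h.symm hij
    · rfl
  have hset : {S : Set (Fin m) | ∃ x, Cyclic (Cyc f (capcup i j)) x ∧
      S = cycleOf (Cyc f (capcup i j)) x} = {{i}, {j}} := by
    ext S
    simp only [Set.mem_setOf_eq, Set.mem_insert_iff, Set.mem_singleton_iff]
    constructor
    · rintro ⟨x, ⟨k, hk, hpow⟩, rfl⟩
      have hx : x = i ∨ x = j := by
        cases k with
        | zero => omega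
        | succ k =>
          obtain ⟨z, hz, -⟩ := hpow
          rcases (hCyc x z).1 hz with ⟨rfl, -⟩ | ⟨rfl, -⟩
          · exact Or.inl rfl
          · exact Or.inr rfl
      rcases hx with rfl | rfl
      · exact Or.inl (cycleOf_fix hfixi)
      · exact Or.inr (cycleOf_fix hfixj)
    · rintro (rfl | rfl)
      · exact ⟨i, ⟨1, one_pos, ⟨i, (hCyc i i).2 (Or.inl ⟨rfl, rfl⟩), rfl⟩⟩,
          (cycleOf_fix hfixi).symm⟩
      · exact ⟨j, ⟨1, one_pos, ⟨j, (hCyc j j).2 (Or.inr ⟨rfl, rfl⟩), rfl⟩⟩,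
          (cycleOf_fix hfixj).symm⟩
  rw [Z, hset]
  exact Set.ncard_pair (fun h => hij (Set.singleton_eq_singleton_iff.1 h))

end AuxCapcupExec
section AuxAdjCap
open Sum Relation

lemma exists_adj_cap {n m : ℕ} {f : Fin n ⊕ Fin m → Fin n ⊕ Fin m} (hP : Planar f)
    (hc : HasCap f) : ∃ a b : Fin m, f (Sum.inr a) = Sum.inr b ∧ (b : ℕ) = (a : ℕ) + 1 := by
  have key : ∀ d (a b : Fin m), (b : ℕ) - (a : ℕ) ≤ d → (a : ℕ) < (b : ℕ) →
      f (Sum.inr a) = Sum.inr b →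
      ∃ a b : Fin m, f (Sum.inr a) = Sum.inr b ∧ (b : ℕ) = (a : ℕ) + 1 := by
    intro d
    induction d with
    | zero => intro a b h1 h2 _; omega
    | succ d ih =>
      intro a b h1 h2 hab
      by_cases hadj : (b : ℕ) = (a : ℕ) + 1
      · exact ⟨a, b, hab, hadj⟩
      · have hb : (a : ℕ) + 1 < (b : ℕ) := by omega
        have hbm : (a : ℕ) + 1 < m := lt_trans hb b.isLt
        set k : Fin m := ⟨(a : ℕ) + 1, hbm⟩ with hk
        have hkv : (k : ℕ) = (a : ℕ) + 1 := rfl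
        have h3 : (Sum.inr a : Fin n ⊕ Fin m) < Sum.inr k := by
          rw [Sum.inr_lt_inr_iff, Fin.lt_def]; omega
        have h4 : (Sum.inr k : Fin n ⊕ Fin m) < f (Sum.inr a) := by
          rw [hab, Sum.inr_lt_inr_iff, Fin.lt_def]; omega
        obtain ⟨h5, h6⟩ := hP.2.1 _ _ h3 h4
        rw [hab] at h6
        rcases hfk : f (Sum.inr k) with z | k'
        · rw [hfk] at h6; exact absurd h6 (by simp)
        · rw [hfk] at h5 h6
          rw [Sum.inr_lt_inr_iff, Fin.lt_def] at h5 h6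
          have hkk' : k ≠ k' := by
            rintro rfl; exact hP.1.2 _ hfk
          have hklt : (k : ℕ) < (k' : ℕ) := by
            have : (k : ℕ) ≠ (k' : ℕ) := fun h => hkk' (Fin.ext h)
            omega
          exact ih k k' (by omega) hklt hfk
  obtain ⟨i, j, hij⟩ := hc
  have hne : i ≠ j := by rintro rfl; exact hP.1.2 _ hij
  rcases lt_or_gt_of_ne (fun h : (i : ℕ) = (j : ℕ) => hne (Fin.ext h)) with h | h
  · exact key _ i j le_rfl h hij
  · have hji : f (Sum.inr j) = Sum.inr i := by
      have := hP.1.1 (Sum.inr i); rwa [hij] at this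
    exact key _ j i le_rfl h hji
end AuxAdjCap

section AuxNoCap
open Sum Relation

variable {n m p : ℕ} {f : Fin n ⊕ Fin m → Fin n ⊕ Fin m}
  {g : Fin m ⊕ Fin p → Fin m ⊕ Fin p}

/-- Composite function when `f` has no caps (junk values in unreachable branches). -/
def noCapComp (f : Fin n ⊕ Fin m → Fin n ⊕ Fin m)
    (g : Fin m ⊕ Fin p → Fin m ⊕ Fin p) : Fin n ⊕ Fin p → Fin n ⊕ Fin p :=
  fun x => match x with
  | Sum.inl a => match f (Sum.inl a) with
    | Sum.inl b => Sum.inl b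
    | Sum.inr k => match g (Sum.inl k) with
      | Sum.inr c => Sum.inr c
      | Sum.inl k' => match f (Sum.inr k') with
        | Sum.inl b => Sum.inl b
        | Sum.inr _ => Sum.inl a
  | Sum.inr c => match g (Sum.inr c) with
    | Sum.inr c' => Sum.inr c'
    | Sum.inl k => match f (Sum.inr k) with
      | Sum.inl b => Sum.inl b
      | Sum.inr _ => Sum.inr c

lemma noCapComp_e1 {a b} (hfa : f (Sum.inl a) = Sum.inl b) :
    noCapComp f g (Sum.inl a) = Sum.inl b := by simp [noCapComp, hfa]

lemma noCapComp_e2 {a k c} (hfa : f (Sum.inl a) = Sum.inr k)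
    (hgk : g (Sum.inl k) = Sum.inr c) :
    noCapComp f g (Sum.inl a) = Sum.inr c := by simp [noCapComp, hfa, hgk]

lemma noCapComp_e3 {a k k' b} (hfa : f (Sum.inl a) = Sum.inr k)
    (hgk : g (Sum.inl k) = Sum.inl k') (hfk : f (Sum.inr k') = Sum.inl b) :
    noCapComp f g (Sum.inl a) = Sum.inl b := by simp [noCapComp, hfa, hgk, hfk]

lemma noCapComp_e4 {c c'} (hgc : g (Sum.inr c) = Sum.inr c') :
    noCapComp f g (Sum.inr c) = Sum.inr c' := by simp [noCapComp, hgc]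

lemma noCapComp_e5 {c k b} (hgc : g (Sum.inr c) = Sum.inl k)
    (hfk : f (Sum.inr k) = Sum.inl b) :
    noCapComp f g (Sum.inr c) = Sum.inl b := by simp [noCapComp, hgc, hfk]

lemma execR_noCap (hc : ∀ a b : Fin m, f (Sum.inr a) ≠ Sum.inr b) :
    ExecR (graphRel f) (graphRel g) = graphRel (noCapComp f g) := by
  have fwd : ∀ x y, ExecR (graphRel f) (graphRel g) x y → noCapComp f g x = y := by
    intro x y
    cases x <;> cases y <;> simp only [ExecR, graphRel, Relation.Comp]
    case inl.inl a b =>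
      rintro (h | ⟨k, hk, k2, hk2, k3, hst, hb⟩)
      · exact noCapComp_e1 h
      · obtain rfl := rtg_of_no_step hst (by rintro d ⟨e, he, -⟩; exact hc _ _ he)
        exact noCapComp_e3 hk hk2 hb
    case inl.inr a c =>
      rintro ⟨k, hk, k3, hst, hb⟩
      obtain rfl := rtg_of_no_step hst (by rintro d ⟨e, -, he⟩; exact hc _ _ he)
      exact noCapComp_e2 hk hb
    case inr.inl c b =>
      rintro ⟨k, hk, k3, hst, hb⟩
      obtain rfl := rtg_of_no_step hst (by rintro d ⟨e, he, -⟩; exact hc _ _ he)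
      exact noCapComp_e5 hk hb
    case inr.inr c c' =>
      rintro (h | ⟨k, hk, k', hk', rest⟩)
      · exact noCapComp_e4 h
      · exact absurd hk' (hc _ _)
  have bwd : ∀ x, ExecR (graphRel f) (graphRel g) x (noCapComp f g x) := by
    rintro (a | c)
    · rcases hfa : f (Sum.inl a) with b | k
      · rw [noCapComp_e1 hfa]
        exact Or.inl hfa
      · rcases hgk : g (Sum.inl k) with k' | c
        · rcases hfk : f (Sum.inr k') with b | c2
          · rw [noCapComp_e3 hfa hgk hfk]
            exact Or.inr ⟨k, hfa, k', hgk, k', .refl, hfk⟩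
          · exact absurd hfk (hc _ _)
        · rw [noCapComp_e2 hfa hgk]
          exact ⟨k, hfa, k, .refl, hgk⟩
    · rcases hgc : g (Sum.inr c) with k | c'
      · rcases hfk : f (Sum.inr k) with b | c2
        · rw [noCapComp_e5 hgc hfk]
          exact ⟨k, hgc, k, .refl, hfk⟩
        · exact absurd hfk (hc _ _)
      · rw [noCapComp_e4 hgc]
        exact Or.inl hgc
  funext x y
  rw [eq_iff_iff]
  constructor
  · exact fwd x y
  · intro h
    rw [show y = noCapComp f g x from h.symm]
    exact bwd x

lemma noCapComp_inj (hinv : Function.Involutive f)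
    (hc : ∀ a b : Fin m, f (Sum.inr a) ≠ Sum.inr b)
    {h : Fin m ⊕ Fin p → Fin m ⊕ Fin p}
    (heq : noCapComp f g = noCapComp f h) : g = h := by
  have hinj := hinv.injective
  have hout : ∀ k : Fin m, ∃ b, f (Sum.inr k) = Sum.inl b := by
    intro k
    rcases hfk : f (Sum.inr k) with b | c
    · exact ⟨b, rfl⟩
    · exact absurd hfk (hc _ _)
  funext x
  rcases x with k | c
  · obtain ⟨b, hb⟩ := hout k
    have hfb : f (Sum.inl b) = Sum.inr k := by
      have := hinv (Sum.inr k); rwa [hb] at this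
    have h2 := congrFun heq (Sum.inl b)
    rcases hgk : g (Sum.inl k) with k1 | c1 <;> rcases hhk : h (Sum.inl k) with k2 | c2
    · obtain ⟨b1, hb1⟩ := hout k1
      obtain ⟨b2, hb2⟩ := hout k2
      rw [noCapComp_e3 hfb hgk hb1, noCapComp_e3 hfb hhk hb2] at h2
      obtain rfl : b1 = b2 := by simpa using h2
      have : (Sum.inr k1 : Fin n ⊕ Fin m) = Sum.inr k2 := hinj (hb1.trans hb2.symm)
      simpa using this
    · obtain ⟨b1, hb1⟩ := hout k1
      rw [noCapComp_e3 hfb hgk hb1, noCapComp_e2 hfb hhk] at h2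
      simp at h2
    · obtain ⟨b2, hb2⟩ := hout k2
      rw [noCapComp_e2 hfb hgk, noCapComp_e3 hfb hhk hb2] at h2
      simp at h2
    · rw [noCapComp_e2 hfb hgk, noCapComp_e2 hfb hhk] at h2
      simpa using h2
  · have h2 := congrFun heq (Sum.inr c)
    rcases hgc : g (Sum.inr c) with k1 | c1 <;> rcases hhc : h (Sum.inr c) with k2 | c2
    · obtain ⟨b1, hb1⟩ := hout k1
      obtain ⟨b2, hb2⟩ := hout k2
      rw [noCapComp_e5 hgc hb1, noCapComp_e5 hhc hb2] at h2
      obtain rfl : b1 = b2 := by simpa using h2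
      have : (Sum.inr k1 : Fin n ⊕ Fin m) = Sum.inr k2 := hinj (hb1.trans hb2.symm)
      simpa using this
    · obtain ⟨b1, hb1⟩ := hout k1
      rw [noCapComp_e5 hgc hb1, noCapComp_e4 hhc] at h2
      simp at h2
    · obtain ⟨b2, hb2⟩ := hout k2
      rw [noCapComp_e4 hgc, noCapComp_e5 hhc hb2] at h2
      simp at h2
    · rw [noCapComp_e4 hgc, noCapComp_e4 hhc] at h2
      simpa using h2

end AuxNoCap
/-- A morphism `f : n → m` of the Temperley-Lieb diagram category `D` is epic
iff it has no caps. -/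
theorem stmt_14 (n m : ℕ) (F : TLHom n m) (hF : Planar F.2) :
    Epic F ↔ ¬ HasCap F.2 := by
  constructor
  · intro hE hcap
    obtain ⟨i, j, hcap2, hji⟩ := exists_adj_cap hF hcap
    have hij : i ≠ j := by intro h; rw [h] at hji; omega
    have h1 : execFun F.2 (Sum.swap : Fin m ⊕ Fin m → Fin m ⊕ Fin m) = F.2 :=
      execFun_eq_of_graph _ _ _ (execR_swap F.2)
    have h2 : execFun F.2 (capcup i j) = F.2 :=
      execFun_eq_of_graph _ _ _ (execR_capcup hF.1.1 hcap2)
    have z1 : Z F.2 (Sum.swap : Fin m ⊕ Fin m → Fin m ⊕ Fin m) = 0 :=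
      Z_eq_zero_of_cyc_empty _ _ (by rintro a b ⟨d, -, hd⟩; simp [Sum.swap] at hd)
    have z2 : Z F.2 (capcup i j) = 2 := Z_capcup hF.1.1 hcap2 hij
    have hGH : TLcomp F ((2, Sum.swap) : TLHom m m) = TLcomp F ((0, capcup i j) : TLHom m m) := by
      unfold TLcomp
      simp only [h1, h2, z1, z2, add_zero]
      rfl
    have := hE m (2, Sum.swap) (0, capcup i j) (planar_swap m) (planar_capcup hji) hGH
    have h20 : (2 : ℕ) = 0 := congrArg Prod.fst this
    simp at h20
  · intro hnc p G H hPG hPH hcomp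
    have hc : ∀ a b : Fin m, F.2 (Sum.inr a) ≠ Sum.inr b := fun a b h => hnc ⟨a, b, h⟩
    have e1 : execFun F.2 G.2 = noCapComp F.2 G.2 :=
      execFun_eq_of_graph _ _ _ (execR_noCap hc)
    have e2 : execFun F.2 H.2 = noCapComp F.2 H.2 :=
      execFun_eq_of_graph _ _ _ (execR_noCap hc)
    have z1 : Z F.2 G.2 = 0 :=
      Z_eq_zero_of_cyc_empty _ _ (by rintro a b ⟨d, hd, -⟩; exact hc a d hd)
    have z2 : Z F.2 H.2 = 0 :=
      Z_eq_zero_of_cyc_empty _ _ (by rintro a b ⟨d, hd, -⟩; exact hc a d hd)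
    have hfst : F.1 + G.1 + Z F.2 G.2 = F.1 + H.1 + Z F.2 H.2 :=
      congrArg Prod.fst hcomp
    rw [z1, z2] at hfst
    have hsnd : execFun F.2 G.2 = execFun F.2 H.2 := congrArg Prod.snd hcomp
    rw [e1, e2] at hsnd
    have hg : G.2 = H.2 := noCapComp_inj hF.1.1 hc hsnd
    have hn : G.1 = H.1 := by omega
    exact Prod.ext hn hg
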